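/- arXiv:2111.12240 — 2 statements merged into one kernel-verified Lean document; each statement's English description precedes it below -/
import Mathlib

section
/- If T is a tree of order n, then pt_+(T) ≤ ⌈(n−1)/2⌉, with equality when T is a path. -/
open SimpleGraph Set

variable {V : Type*}

/-- The subgraph of `G` obtained by deleting the vertices of `B`
(kept as isolated vertices). -/
def delVerts (G : SimpleGraph V) (B : Set V) : SimpleGraph V where
  Adj a b := G.Adj a b ∧ a ∉ B ∧ b ∉ B
  symm := ⟨fun _ _ ⟨h, ha, hb⟩ => ⟨h.symm, hb, ha⟩⟩
  loopless := ⟨fun a ⟨h, _, _⟩ => G.irrefl h⟩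

/-- `u` may PSD-force `w` when the set of blue vertices is `B`:  `u` is blue, `w` is a white
neighbor of `u`, and `w` is the unique white neighbor of `u` in the component of `G - B`
containing `w`. -/
def PSDForce (G : SimpleGraph V) (B : Set V) (u w : V) : Prop :=
  u ∈ B ∧ w ∉ B ∧ G.Adj u w ∧
    ∀ x, G.Adj u x → x ∉ B → (delVerts G B).Reachable x w → x = w

/-- One round of simultaneous PSD forcing starting from blue set `B`. -/
def psdStep (G : SimpleGraph V) (B : Set V) : Set V :=
  B ∪ {w | ∃ u, PSDForce G B u w}

/-- `B` is a PSD forcing set of `G`. -/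
def IsPSDForcingSet (G : SimpleGraph V) (B : Set V) : Prop :=
  ∃ t, (psdStep G)^[t] B = Set.univ

/-- The PSD propagation time `pt_+(G; B)` of the set `B` in `G`. -/
noncomputable def psdPropTime (G : SimpleGraph V) (B : Set V) : ℕ :=
  sInf {t | (psdStep G)^[t] B = Set.univ}

/-- The PSD zero forcing number `Z_+(G)`. -/
noncomputable def psdZ (G : SimpleGraph V) : ℕ :=
  sInf {k | ∃ B : Set V, IsPSDForcingSet G B ∧ B.ncard = k}

/-- The `k`-PSD propagation time `pt_+(G, k)`: the minimum of `pt_+(G; B)` over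
PSD forcing sets `B` of size `k`. -/
noncomputable def psdPt (G : SimpleGraph V) (k : ℕ) : ℕ :=
  sInf {t | ∃ B : Set V, IsPSDForcingSet G B ∧ B.ncard = k ∧ psdPropTime G B = t}

/-- The PSD propagation time `pt_+(G) = pt_+(G, Z_+(G))`. -/
noncomputable def psdPtG (G : SimpleGraph V) : ℕ := psdPt G (psdZ G)

/-- The PSD propagation time of `B` within the induced subgraph `G[U]` (for `B ⊆ U`),
realized by making the vertices outside `U` isolated and initially blue. -/
noncomputable def psdPropTimeOn (G : SimpleGraph V) (U B : Set V) : ℕ :=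
  psdPropTime (delVerts G Uᶜ) (B ∪ Uᶜ)

/-- The vertex set of the component of `G - B` containing the white vertex `w`. -/
def compOf (G : SimpleGraph V) (B : Set V) (w : V) : Set V :=
  {x | x ∉ B ∧ (delVerts G B).Reachable x w}

/-- In a tree, every path realizes the distance. -/
lemma tree_path_dist {G : SimpleGraph V} (hT : G.IsTree) {a b : V} {p : G.Walk a b}
    (hp : p.IsPath) : p.length = G.dist a b := by
  obtain ⟨q, hq, hql⟩ := hT.isConnected.exists_path_of_dist a b
  have := hT.existsUnique_path a b
  obtain ⟨r, -, hr⟩ := this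
  rw [hr p hp, hr q hq] at *
  exact hql

/-- support of a walk in `delVerts G B` avoids `B`, provided endpoints do. -/
lemma delVerts_walk_support {G : SimpleGraph V} {B : Set V} {x w : V}
    (p : (delVerts G B).Walk x w) (hx : x ∉ B) {y : V} (hy : y ∈ p.support) : y ∉ B := by
  induction p with
  | nil => simp at hy; subst hy; exact hx
  | cons h q ih =>
    rcases List.mem_cons.mp hy with rfl | hy'
    · exact hx
    · exact ih h.2.2 hy'

lemma delVerts_le {G : SimpleGraph V} {B : Set V} : delVerts G B ≤ G := fun _ _ h => h.1

/-- In a tree, `psdStep` is just closed neighborhood expansion. -/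
lemma tree_psdStep {G : SimpleGraph V} [DecidableEq V] (hT : G.IsTree) (B : Set V) :
    psdStep G B = B ∪ {w | ∃ u ∈ B, G.Adj u w} := by
  ext w
  simp only [psdStep, Set.mem_union, Set.mem_setOf_eq]
  constructor
  · rintro (h | ⟨u, hu, _, hadj, _⟩)
    · exact Or.inl h
    · exact Or.inr ⟨u, hu, hadj⟩
  · rintro (h | ⟨u, hu, hadj⟩)
    · exact Or.inl h
    · by_cases hw : w ∈ B
      · exact Or.inl hw
      refine Or.inr ⟨u, hu, hw, hadj, ?_⟩
      intro x hux hx hreach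
      by_contra hne
      obtain ⟨q⟩ := hreach
      -- q : walk in delVerts from x to w; its support avoids B
      have hsupp : ∀ y ∈ q.support, y ∉ B := fun y hy => delVerts_walk_support q hx hy
      -- map to a walk in G
      let q' : G.Walk x w := q.mapLe delVerts_le
      have hsupp' : q'.support = q.support := by
        simp only [q', Walk.mapLe, Walk.support_map]
        exact List.map_id _
      -- the path x → w avoiding u
      let P1 : G.Walk x w := (q'.toPath : G.Walk x w)
      have hP1 : P1.IsPath := q'.toPath.2
      have hu_not : u ∉ P1.support := by
        intro hmem
        have : u ∈ q'.support := q'.support_toPath_subset hmem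
        rw [hsupp'] at this
        exact hsupp u this hu
      -- the path x → u → w
      have hxu : x ≠ u := fun h => hx (h ▸ hu)
      have hwu : w ≠ u := fun h => hw (h ▸ hu)
      let P2 : G.Walk x w := Walk.cons hux.symm (Walk.cons hadj Walk.nil)
      have hP2 : P2.IsPath := by
        simp [P2, Walk.isPath_def, hxu, hne, hwu.symm]
      obtain ⟨r, -, hr⟩ := hT.existsUnique_path x w
      have : P1 = P2 := by rw [hr P1 hP1, hr P2 hP2]
      apply hu_not
      rw [this]
      simp [P2]

lemma walk_split {G : SimpleGraph V} {a b : V} (p : G.Walk a b) :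
    ∀ h : ℕ, h ≤ p.length → ∃ (m : V) (p1 : G.Walk a m) (p2 : G.Walk m b),
      p = p1.append p2 ∧ p1.length = h := by
  induction p with
  | nil =>
    intro h hh
    simp only [Walk.length_nil, Nat.le_zero] at hh
    exact ⟨_, Walk.nil, Walk.nil, rfl, by simp [hh]⟩
  | cons e q ih =>
    intro h hh
    cases h with
    | zero => exact ⟨_, Walk.nil, Walk.cons e q, rfl, rfl⟩
    | succ h =>
      obtain ⟨m, p1, p2, hp, hl⟩ := ih h (by simpa using hh)
      exact ⟨m, Walk.cons e p1, p2, by simp [hp], by simp [hl]⟩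

lemma exists_adj_dist_le {G : SimpleGraph V} {v u : V} {t : ℕ}
    (h : G.dist v u = t + 1) : ∃ w, G.Adj w u ∧ G.dist v w ≤ t := by
  obtain ⟨p, hp⟩ := exists_walk_of_dist_ne_zero (by omega : G.dist v u ≠ 0)
  obtain ⟨m, p1, p2, hsplit, hl⟩ := walk_split p t (by omega)
  refine ⟨m, ?_, hl ▸ dist_le p1⟩
  have hp2 : p2.length = 1 := by
    have := congrArg Walk.length hsplit
    rw [Walk.length_append] at this
    omega
  have h2 := p2.adj_getVert_succ (by omega : 0 < p2.length)
  rw [show (0:ℕ)+1 = p2.length by omega] at h2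
  simpa using h2

noncomputable def ecc (G : SimpleGraph V) [Fintype V] (v : V) : ℕ :=
  Finset.univ.sup (G.dist v)

lemma ball_iterate {G : SimpleGraph V} [Fintype V] (hconn : G.Connected) (v : V) (t : ℕ) :
    (fun B => B ∪ {w | ∃ u ∈ B, G.Adj u w})^[t] {v} = {u | G.dist v u ≤ t} := by
  induction t with
  | zero =>
    ext u
    simp only [Function.iterate_zero, id_eq, Set.mem_singleton_iff, Set.mem_setOf_eq,
      Nat.le_zero]
    rw [hconn.dist_eq_zero_iff, eq_comm]
  | succ t ih =>
    rw [Function.iterate_succ_apply', ih]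
    ext u
    simp only [Set.mem_union, Set.mem_setOf_eq]
    constructor
    · rintro (h | ⟨w, hw, hadj⟩)
      · omega
      · have := hconn.dist_triangle (u := v) (v := w) (w := u)
        have h1 : G.dist w u = 1 := dist_eq_one_iff_adj.mpr hadj
        omega
    · intro h
      rcases Nat.lt_or_ge (G.dist v u) (t + 1) with h' | h'
      · exact Or.inl (by omega)
      · have heq : G.dist v u = t + 1 := by omega
        obtain ⟨w, hadj, hle⟩ := exists_adj_dist_le heq
        exact Or.inr ⟨w, hle, hadj⟩



lemma path_append {G : SimpleGraph V} {a m x : V} {p : G.Walk a m} {q : G.Walk m x}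
    (hp : p.IsPath) (hq : q.IsPath) (hdisj : ∀ y ∈ p.support, y ∈ q.support → y = m) :
    (p.append q).IsPath := by
  rw [Walk.isPath_def, Walk.support_append]
  refine List.Nodup.append hp.support_nodup hq.support_nodup.tail ?_
  intro y hyp hyt
  have hy : y ∈ q.support := List.mem_of_mem_tail hyt
  have : y = m := hdisj y hyp hy
  subst this
  have := hq.support_nodup
  rw [q.support_eq_cons] at this
  exact (List.nodup_cons.mp this).1 hyt

lemma branch {G : SimpleGraph V} [DecidableEq V] (hT : G.IsTree) {m x a y : V} {r : G.Walk m x} (hr : r.IsPath)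
    (hy : y ∈ r.support) (hym : y ≠ m) {t : G.Walk a m} (ht : t.IsPath)
    (hyt : y ∈ t.support) : r.getVert 1 ∈ t.support := by
  set r1 := r.takeUntil y hy with hr1def
  have hr1 : r1.IsPath := hr.takeUntil hy
  have ht2 : (t.dropUntil y hyt).IsPath := ht.dropUntil hyt
  obtain ⟨w, -, hw⟩ := hT.existsUnique_path y m
  have hequ : r1.reverse = t.dropUntil y hyt := by
    rw [hw _ (hr1.reverse), hw _ ht2]
  have hsub : r1.support ⊆ t.support := by
    intro z hz
    have : z ∈ r1.reverse.support := by rwa [Walk.support_reverse, List.mem_reverse]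
    rw [hequ] at this
    exact t.support_dropUntil_subset hyt this
  have hlen : 1 ≤ r1.length := by
    by_contra hcon
    have h0 : r1.length = 0 := by omega
    have := r1.getVert_length
    rw [h0, r1.getVert_zero] at this
    exact hym this.symm
  apply hsub
  have hspec := r.take_spec hy
  have hgv : r.getVert 1 = if 1 < r1.length then r1.getVert 1
      else (r.dropUntil y hy).getVert (1 - r1.length) := by
    conv_lhs => rw [← hspec]
    exact Walk.getVert_append _ _ 1
  by_cases hc : 1 < r1.length
  · rw [if_pos hc] at hgv
    rw [hgv]
    exact Walk.mem_support_iff_exists_getVert.mpr ⟨1, rfl, by omega⟩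
  · have h1 : r1.length = 1 := by omega
    rw [if_neg hc, h1] at hgv
    simp only [Nat.sub_self, Walk.getVert_zero] at hgv
    rw [hgv]
    exact Walk.end_mem_support r1

lemma tree_radius {G : SimpleGraph V} [DecidableEq V] [Fintype V] (hT : G.IsTree) :
    ∃ v, ∀ x, G.dist v x ≤ Fintype.card V / 2 := by
  have hne : Nonempty V := hT.isConnected.nonempty
  obtain ⟨⟨a, b⟩, -, hmax⟩ := Finset.exists_max_image (Finset.univ : Finset (V × V))
    (fun p => G.dist p.1 p.2) ⟨(Classical.arbitrary V, Classical.arbitrary V), Finset.mem_univ _⟩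
  set D := G.dist a b with hD
  have hmax' : ∀ y z : V, G.dist y z ≤ D := fun y z => hmax (y, z) (Finset.mem_univ _)
  obtain ⟨p, hp, hpl⟩ := hT.isConnected.exists_path_of_dist a b
  set h := (D + 1) / 2 with hh
  obtain ⟨m, p1, p2, hsplit, hl1⟩ := walk_split p h (by rw [hpl]; omega)
  have hlen : p1.length + p2.length = D := by
    have := congrArg Walk.length hsplit
    rw [Walk.length_append] at this
    omega
  have hp1 : p1.IsPath := by
    rw [hsplit] at hp; exact hp.of_append_left
  have hp2 : p2.IsPath := by
    rw [hsplit] at hp; exact hp.of_append_right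
  have hdisj : ∀ s, s ∈ p1.support → s ∈ p2.support → s = m := by
    intro s hs1 hs2
    by_contra hsm
    rw [hsplit, Walk.isPath_def, Walk.support_append] at hp
    have hdj := (List.nodup_append'.mp hp).2.2
    apply hdj hs1
    rw [p2.support_eq_cons] at hs2
    rcases List.mem_cons.mp hs2 with h' | h'
    · exact absurd h' hsm
    · exact h'
  have hDcard : D + 1 ≤ Fintype.card V := by
    have := hp.length_lt
    omega
  refine ⟨m, fun x => le_trans ?_ (by omega : h ≤ Fintype.card V / 2)⟩
  -- show dist m x ≤ h
  by_contra hcon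
  push_neg at hcon
  obtain ⟨r, hr, hrl⟩ := hT.isConnected.exists_path_of_dist m x
  set L := G.dist m x with hL
  have hL1 : h + 1 ≤ L := hcon
  have hdam : G.dist a m = h := by rw [← tree_path_dist hT hp1]; omega
  by_cases hA : ∀ y ∈ p1.support, y ∈ r.support → y = m
  · -- path a → x through m
    have hP : (p1.append r).IsPath := path_append hp1 hr hA
    have := tree_path_dist hT hP
    rw [Walk.length_append] at this
    have hax := hmax' a x
    omega
  by_cases hB : ∀ y ∈ p2.support, y ∈ r.support → y = m
  · have hB' : ∀ y ∈ p2.reverse.support, y ∈ r.support → y = m := by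
      intro y hy
      rw [Walk.support_reverse, List.mem_reverse] at hy
      exact hB y hy
    have hP : (p2.reverse.append r).IsPath := path_append hp2.reverse hr hB'
    have := tree_path_dist hT hP
    rw [Walk.length_append, Walk.length_reverse] at this
    have hbx := hmax' b x
    omega
  push_neg at hA hB
  obtain ⟨y1, hy1p, hy1r, hy1m⟩ := hA
  obtain ⟨y2, hy2p, hy2r, hy2m⟩ := hB
  have hs1 : r.getVert 1 ∈ p1.support := branch hT hr hy1r hy1m hp1 hy1p
  have hy2p' : y2 ∈ p2.reverse.support := by
    rwa [Walk.support_reverse, List.mem_reverse]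
  have hs2' : r.getVert 1 ∈ p2.reverse.support := branch hT hr hy2r hy2m hp2.reverse hy2p'
  have hs2 : r.getVert 1 ∈ p2.support := by
    rwa [Walk.support_reverse, List.mem_reverse] at hs2'
  have hsm : r.getVert 1 = m := hdisj _ hs1 hs2
  have hadj : G.Adj m (r.getVert 1) := by
    have := r.adj_getVert_succ (by omega : 0 < r.length)
    simpa using this
  exact hadj.ne' hsm



lemma pathGraph_walk_length {n : ℕ} {i j : Fin n} (p : (pathGraph n).Walk i j) :
    (i : ℕ) - j ≤ p.length ∧ (j : ℕ) - i ≤ p.length := by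
  induction p with
  | nil => omega
  | cons e q ih =>
    rw [pathGraph_adj] at e
    simp only [Walk.length_cons]
    omega

lemma psdStep_iterate_tree {G : SimpleGraph V} [DecidableEq V] [Fintype V] (hT : G.IsTree)
    (v : V) (t : ℕ) : (psdStep G)^[t] {v} = {u | G.dist v u ≤ t} := by
  have hstep : psdStep G = fun B => B ∪ {w | ∃ u ∈ B, G.Adj u w} :=
    funext fun B => tree_psdStep hT B
  rw [hstep]
  exact ball_iterate hT.isConnected v t

lemma psdPropTime_singleton {G : SimpleGraph V} [DecidableEq V] [Fintype V] (hT : G.IsTree)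
    (v : V) : psdPropTime G {v} = ecc G v := by
  have hset : {t | (psdStep G)^[t] {v} = Set.univ} = Set.Ici (ecc G v) := by
    ext t
    rw [Set.mem_setOf_eq, psdStep_iterate_tree hT v t, Set.mem_Ici]
    constructor
    · intro h
      rw [ecc]
      refine Finset.sup_le fun u _ => ?_
      have : u ∈ {u | G.dist v u ≤ t} := h ▸ Set.mem_univ u
      exact this
    · intro h
      ext u
      simp only [Set.mem_setOf_eq, Set.mem_univ, iff_true]
      exact le_trans (Finset.le_sup (Finset.mem_univ u)) h
  rw [psdPropTime, hset, csInf_Ici]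

lemma singleton_forcing {G : SimpleGraph V} [DecidableEq V] [Fintype V] (hT : G.IsTree)
    (v : V) : IsPSDForcingSet G {v} := by
  refine ⟨ecc G v, ?_⟩
  rw [psdStep_iterate_tree hT v]
  ext u
  simp only [Set.mem_setOf_eq, Set.mem_univ, iff_true]
  exact Finset.le_sup (Finset.mem_univ u)

lemma psdStep_empty (G : SimpleGraph V) : psdStep G ∅ = ∅ := by
  ext w
  simp [psdStep, PSDForce]

lemma psdZ_tree {G : SimpleGraph V} [DecidableEq V] [Fintype V] (hT : G.IsTree) :
    psdZ G = 1 := by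
  have hne : Nonempty V := hT.isConnected.nonempty
  have h1 : (1 : ℕ) ∈ {k | ∃ B : Set V, IsPSDForcingSet G B ∧ B.ncard = k} :=
    ⟨{Classical.arbitrary V}, singleton_forcing hT _, Set.ncard_singleton _⟩
  have h0 : (0 : ℕ) ∉ {k | ∃ B : Set V, IsPSDForcingSet G B ∧ B.ncard = k} := by
    rintro ⟨B, ⟨t, ht⟩, hB⟩
    have hBe : B = ∅ := (Set.ncard_eq_zero (Set.toFinite B)).mp hB
    subst hBe
    have hit : ∀ s : ℕ, (psdStep G)^[s] (∅ : Set V) = ∅ := by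
      intro s
      induction s with
      | zero => rfl
      | succ s ih => rw [Function.iterate_succ_apply', ih, psdStep_empty]
    rw [hit t] at ht
    exact (Set.empty_ne_univ ht).elim
  refine le_antisymm (Nat.sInf_le h1) ?_
  have hmem := Nat.sInf_mem (⟨1, h1⟩ : Set.Nonempty _)
  rcases Nat.eq_zero_or_pos (sInf {k | ∃ B : Set V, IsPSDForcingSet G B ∧ B.ncard = k}) with
    h | h
  · rw [h] at hmem; exact absurd hmem h0
  · exact h

lemma psdPtG_tree {G : SimpleGraph V} [DecidableEq V] [Fintype V] (hT : G.IsTree) :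
    psdPtG G = sInf (Set.range (ecc G)) := by
  rw [psdPtG, psdZ_tree hT, psdPt]
  congr 1
  ext t
  simp only [Set.mem_setOf_eq, Set.mem_range]
  constructor
  · rintro ⟨B, -, hB1, hBt⟩
    obtain ⟨v, rfl⟩ := Set.ncard_eq_one.mp hB1
    exact ⟨v, by rw [← psdPropTime_singleton hT v, hBt]⟩
  · rintro ⟨v, rfl⟩
    exact ⟨{v}, singleton_forcing hT v, Set.ncard_singleton v,
      psdPropTime_singleton hT v⟩

/-- if `T` is a tree of order `n` then `pt_+(T) ≤ ⌈(n-1)/2⌉`, with equality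
when `T` is a path. -/
theorem stmt7 [Fintype V] (G : SimpleGraph V) (hT : G.IsTree) :
    psdPtG G ≤ (Fintype.card V - 1 + 1) / 2 ∧
    (Nonempty (G ≃g pathGraph (Fintype.card V)) →
      psdPtG G = (Fintype.card V - 1 + 1) / 2) := by
  classical
  have hne : Nonempty V := hT.isConnected.nonempty
  have hcard : 1 ≤ Fintype.card V := Fintype.card_pos
  have hcardeq : Fintype.card V - 1 + 1 = Fintype.card V := by omega
  rw [hcardeq, psdPtG_tree hT]
  obtain ⟨v₀, hv₀⟩ := tree_radius hT
  have hub : sInf (Set.range (ecc G)) ≤ Fintype.card V / 2 := by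
    refine le_trans (Nat.sInf_le ⟨v₀, rfl⟩) ?_
    exact Finset.sup_le fun u _ => hv₀ u
  refine ⟨hub, fun ⟨f⟩ => ?_⟩
  refine le_antisymm hub ?_
  refine le_csInf ⟨ecc G (Classical.arbitrary V), ⟨_, rfl⟩⟩ ?_
  rintro t ⟨v, rfl⟩
  -- lower bound: every vertex has eccentricity ≥ card/2
  set n := Fintype.card V
  set i : Fin n := f v
  have hn : 0 < n := hcard
  -- pick far endpoint
  obtain ⟨j, hj⟩ : ∃ j : Fin n, n / 2 ≤ (i : ℕ) - j + ((j : ℕ) - i) := by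
    by_cases hc : n / 2 ≤ (i : ℕ)
    · exact ⟨⟨0, hn⟩, by simp; omega⟩
    · refine ⟨⟨n - 1, by omega⟩, ?_⟩
      have : (i : ℕ) < n / 2 := by omega
      simp
      omega
  set u := f.symm j
  have hreach : G.Reachable v u := hT.isConnected v u
  obtain ⟨p, hp⟩ := hreach.exists_walk_length_eq_dist
  have hdist : G.dist v u ≤ ecc G v := Finset.le_sup (Finset.mem_univ u)
  have hmap := pathGraph_walk_length ((p.map f.toHom).copy rfl (f.apply_symm_apply j))
  rw [Walk.length_copy, Walk.length_map, hp] at hmap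
  obtain ⟨hm1, hm2⟩ := hmap
  rw [show (f.toHom v : Fin n) = f v from rfl] at hm1 hm2
  omega
end

section
/- For every n ≥ k ≥ 1 (with n ≥ k + 3 when needed for the lollipop construction), there exists a graph G with |V(G)| = n, Z_+(G) = k, and pt_+(G) = ⌈(n − k)/2⌉; hence the bound pt_+(G) ≤ ⌈(|V(G)| − Z_+(G))/2⌉ is tight for each value of Z_+(G). -/
open SimpleGraph Set

variable {V : Type*}

/-! ### Auxiliary construction -/

/-- Path on vertices `0..m-1` inside `Fin n`; other vertices isolated. -/
def pathG (n m : ℕ) : SimpleGraph (Fin n) where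
  Adj a b := (a.val + 1 = b.val ∨ b.val + 1 = a.val) ∧ a.val < m ∧ b.val < m
  symm := ⟨fun _ _ ⟨h, ha, hb⟩ => ⟨h.symm, hb, ha⟩⟩
  loopless := ⟨fun a ⟨h, _, _⟩ => by omega⟩

/-- The blue set after `t` rounds, starting from the center `c` plus the isolated vertices. -/
def Sset (n m c t : ℕ) : Set (Fin n) :=
  {x | m ≤ x.val ∨ (c ≤ x.val + t ∧ x.val ≤ c + t)}

lemma mem_Sset {n m c t : ℕ} {x : Fin n} :
    x ∈ Sset n m c t ↔ m ≤ x.val ∨ (c ≤ x.val + t ∧ x.val ≤ c + t) := Iff.rfl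

lemma subset_psdStep (G : SimpleGraph V) (B : Set V) : B ⊆ psdStep G B :=
  Set.subset_union_left

lemma mem_psdStep {G : SimpleGraph V} {B : Set V} {w : V} :
    w ∈ psdStep G B ↔ w ∈ B ∨ ∃ u, PSDForce G B u w := by
  simp [psdStep]

lemma reach_gt {n m c t : ℕ} {x w : Fin n}
    (h : (delVerts (pathG n m) (Sset n m c t)).Reachable x w) (hw : c + t < w.val) :
    c + t < x.val := by
  obtain ⟨p⟩ := h
  induction p with
  | nil => exact hw
  | cons h' p ih =>
    obtain ⟨⟨hstep, hxm, hym⟩, hx, hy⟩ := h'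
    have hy' := ih
    simp only [mem_Sset, not_or, not_and, not_le] at hx
    omega

lemma reach_lt {n m c t : ℕ} {x w : Fin n}
    (h : (delVerts (pathG n m) (Sset n m c t)).Reachable x w) (hw : w.val + t < c) :
    x.val + t < c := by
  obtain ⟨p⟩ := h
  induction p with
  | nil => exact hw
  | cons h' p ih =>
    obtain ⟨⟨hstep, hxm, hym⟩, hx, hy⟩ := h'
    have hy' := ih
    simp only [mem_Sset, not_or, not_and, not_le] at hx
    omega

lemma stepS {n m c t : ℕ} (hc : c < m) (hm : m ≤ n) :
    psdStep (pathG n m) (Sset n m c t) = Sset n m c (t + 1) := by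
  apply Set.Subset.antisymm
  · intro w hw
    rcases mem_psdStep.1 hw with hw | ⟨u, hu, hwB, ⟨_, hum, hwm⟩, _⟩
    · rw [mem_Sset] at hw ⊢; omega
    · rw [mem_Sset] at hu ⊢
      omega
  · intro w hw
    rw [mem_Sset] at hw
    by_cases hwB : w ∈ Sset n m c t
    · exact subset_psdStep _ _ hwB
    apply mem_psdStep.2
    right
    have hwB' := hwB
    simp only [mem_Sset, not_or, not_and, not_le] at hwB'
    obtain ⟨hwm, hside⟩ := hwB'
    rcases (by omega : w.val = c + t + 1 ∨ w.val + t + 1 = c) with hval | hval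
    · -- forcer is c + t
      refine ⟨⟨c + t, by omega⟩, ?_, hwB, ⟨Or.inl (by simp [hval]), by simpa using (by omega : c + t < m), hwm⟩, ?_⟩
      · rw [mem_Sset]; simp; omega
      · intro x hadj hx hreach
        have hgt := reach_gt hreach (by omega)
        obtain ⟨hstep, hxm, hx2⟩ := hadj
        simp only at hstep hgt
        have : x.val = w.val := by omega
        exact Fin.ext this
    · -- forcer is w + 1 = c - t
      refine ⟨⟨w.val + 1, by omega⟩, ?_, hwB, ⟨Or.inr (by simp), by simpa using (by omega : w.val + 1 < m), hwm⟩, ?_⟩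
      · rw [mem_Sset]; simp; omega
      · intro x hadj hx hreach
        have hlt := reach_lt hreach (by omega)
        obtain ⟨hstep, hxm, hx2⟩ := hadj
        simp only at hstep hlt
        have : x.val = w.val := by omega
        exact Fin.ext this

lemma iterS {n m c : ℕ} (hc : c < m) (hm : m ≤ n) (t : ℕ) :
    (psdStep (pathG n m))^[t] (Sset n m c 0) = Sset n m c t := by
  induction t with
  | zero => rfl
  | succ t ih => rw [Function.iterate_succ_apply', ih, stepS hc hm]

lemma Sset_univ {n m : ℕ} (hm1 : 1 ≤ m) (hmn : m ≤ n) :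
    Sset n m ((m - 1) / 2) (m / 2) = Set.univ := by
  ext x
  simp only [mem_Sset, Set.mem_univ, iff_true]
  have := x.isLt
  omega

lemma card_aux {n m : ℕ} (hmn : m ≤ n) (u : Fin n) (hu : u.val < m) :
    ({x : Fin n | m ≤ x.val ∨ x = u}).ncard = n - m + 1 := by
  rcases eq_or_lt_of_le hmn with h | h
  · have hset : {x : Fin n | m ≤ x.val ∨ x = u} = {u} := by
      ext x
      have := x.isLt
      simp only [Set.mem_setOf_eq, Set.mem_singleton_iff]
      constructor
      · rintro (h1 | h1); · omega
        · exact h1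
      · intro h1; exact Or.inr h1
    rw [hset, Set.ncard_singleton]; omega
  · have hset : {x : Fin n | m ≤ x.val ∨ x = u} =
        insert u ↑(Finset.Ici (⟨m, h⟩ : Fin n)) := by
      ext x
      simp only [Set.mem_setOf_eq, Set.mem_insert_iff, Finset.coe_Ici, Set.mem_Ici, Fin.le_def]
      tauto
    rw [hset, Set.ncard_insert_of_notMem (by simp [Fin.le_def]; omega),
      Set.ncard_coe_finset, Fin.card_Ici]

/-- key spread lemma: blue vertices after `t` rounds are within distance `t`
of a path vertex of `B`, and isolated blue vertices were blue from the start. -/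
lemma spread {n m : ℕ} (B : Set (Fin n)) (t : ℕ) (x : Fin n)
    (hx : x ∈ (psdStep (pathG n m))^[t] B) :
    (m ≤ x.val → x ∈ B) ∧
      (x.val < m → ∃ u ∈ B, u.val < m ∧ x.val ≤ u.val + t ∧ u.val ≤ x.val + t) := by
  induction t generalizing x with
  | zero => exact ⟨fun _ => hx, fun hxm => ⟨x, hx, hxm, by omega, by omega⟩⟩
  | succ t ih =>
    rw [Function.iterate_succ_apply'] at hx
    rcases mem_psdStep.1 hx with hx | ⟨u, hu, hwB, ⟨hstep, hum, hxm⟩, _⟩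
    · obtain ⟨h1, h2⟩ := ih x hx
      refine ⟨h1, fun hxm => ?_⟩
      obtain ⟨v, hv, hvm, hb1, hb2⟩ := h2 hxm
      exact ⟨v, hv, hvm, by omega, by omega⟩
    · constructor
      · intro h; omega
      · intro _
        obtain ⟨v, hv, hvm, hb1, hb2⟩ := (ih u hu).2 hum
        exact ⟨v, hv, hvm, by omega, by omega⟩

/-- for every `n ≥ k ≥ 1` there is a graph `G` of order `n` with
`Z_+(G) = k` and `pt_+(G) = ⌈(n-k)/2⌉`; thus the bound
`pt_+(G) ≤ ⌈(|V(G)| - Z_+(G))/2⌉` is tight for each value of `Z_+(G)`. -/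
theorem stmt18 (n k : ℕ) (hk : 1 ≤ k) (hkn : k ≤ n) :
    ∃ G : SimpleGraph (Fin n), psdZ G = k ∧ psdPtG G = (n - k + 1) / 2 := by
  set m := n - k + 1 with hmdef
  have hm1 : 1 ≤ m := by omega
  have hmn : m ≤ n := by omega
  set c := (m - 1) / 2 with hcdef
  set T := m / 2 with hTdef
  have hc : c < m := by omega
  have hcn : c < n := by omega
  refine ⟨pathG n m, ?_⟩
  have hB0 : Sset n m c 0 = {x : Fin n | m ≤ x.val ∨ x = (⟨c, hcn⟩ : Fin n)} := by
    ext x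
    simp only [mem_Sset, Set.mem_setOf_eq, Fin.ext_iff]
    omega
  have hB0card : (Sset n m c 0).ncard = k := by
    rw [hB0, card_aux hmn _ hc]; omega
  have hforce0 : IsPSDForcingSet (pathG n m) (Sset n m c 0) :=
    ⟨T, by rw [iterS hc hmn]; exact Sset_univ hm1 hmn⟩
  have key : ∀ B : Set (Fin n), IsPSDForcingSet (pathG n m) B →
      ∃ u : Fin n, u.val < m ∧ u ∈ B ∧ {x : Fin n | m ≤ x.val ∨ x = u} ⊆ B := by
    rintro B ⟨t, ht⟩
    have h0 : (⟨0, by omega⟩ : Fin n) ∈ (psdStep (pathG n m))^[t] B := by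
      rw [ht]; trivial
    obtain ⟨-, h2⟩ := spread B t _ h0
    obtain ⟨u, hu, hum, -, -⟩ := h2 (by simp; omega)
    refine ⟨u, hum, hu, ?_⟩
    rintro x (hx | rfl)
    · have hx' : x ∈ (psdStep (pathG n m))^[t] B := by rw [ht]; trivial
      exact (spread B t x hx').1 hx
    · exact hu
  have hZle : psdZ (pathG n m) = k := by
    apply le_antisymm
    · exact Nat.sInf_le ⟨_, hforce0, hB0card⟩
    · have hne : {j | ∃ B, IsPSDForcingSet (pathG n m) B ∧ B.ncard = j}.Nonempty :=
        ⟨k, _, hforce0, hB0card⟩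
      obtain ⟨B, hBf, hBc⟩ := Nat.sInf_mem hne
      obtain ⟨u, hum, hu, hsub⟩ := key B hBf
      calc k = ({x : Fin n | m ≤ x.val ∨ x = u}).ncard := by
              rw [card_aux hmn u hum]; omega
        _ ≤ B.ncard := Set.ncard_le_ncard hsub (Set.toFinite B)
        _ = _ := hBc
  refine ⟨hZle, ?_⟩
  rw [psdPtG, hZle]
  have timeLB : ∀ B : Set (Fin n), IsPSDForcingSet (pathG n m) B → B.ncard = k →
      ∀ t, (psdStep (pathG n m))^[t] B = Set.univ → T ≤ t := by
    intro B hBf hBc t ht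
    obtain ⟨u, hum, hu, hsub⟩ := key B hBf
    have hBeq : ({x : Fin n | m ≤ x.val ∨ x = u}) = B :=
      Set.eq_of_subset_of_ncard_le hsub
        (by rw [card_aux hmn u hum, hBc]; omega) (Set.toFinite _)
    have h0 : (⟨0, by omega⟩ : Fin n) ∈ (psdStep (pathG n m))^[t] B := by
      rw [ht]; trivial
    have hmm : (⟨m - 1, by omega⟩ : Fin n) ∈ (psdStep (pathG n m))^[t] B := by
      rw [ht]; trivial
    obtain ⟨v₁, hv₁, hv₁m, ha1, ha2⟩ := (spread B t _ h0).2 (by simp; omega)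
    obtain ⟨v₂, hv₂, hv₂m, hb1, hb2⟩ :=
      (spread B t _ hmm).2 (by simpa using (by omega : m - 1 < m))
    rw [← hBeq] at hv₁ hv₂
    have hv₁u : v₁ = u := by
      rcases hv₁ with h | h
      · omega
      · exact h
    have hv₂u : v₂ = u := by
      rcases hv₂ with h | h
      · omega
      · exact h
    subst hv₁u hv₂u
    simp only [Fin.val_mk] at ha1 ha2 hb1 hb2
    omega
  have hPT0 : psdPropTime (pathG n m) (Sset n m c 0) = T := by
    have hTmem : T ∈ {t | (psdStep (pathG n m))^[t] (Sset n m c 0) = Set.univ} := by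
      rw [Set.mem_setOf_eq, iterS hc hmn]; exact Sset_univ hm1 hmn
    apply le_antisymm
    · exact Nat.sInf_le hTmem
    · have := Nat.sInf_mem ⟨T, hTmem⟩
      exact timeLB _ hforce0 hB0card _ this
  apply le_antisymm
  · exact Nat.sInf_le ⟨_, hforce0, hB0card, hPT0⟩
  · have hne : {t | ∃ B, IsPSDForcingSet (pathG n m) B ∧ B.ncard = k ∧
        psdPropTime (pathG n m) B = t}.Nonempty := ⟨T, _, hforce0, hB0card, hPT0⟩
    obtain ⟨B, hBf, hBc, hBt⟩ := Nat.sInf_mem hne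
    obtain ⟨t0, ht0⟩ := hBf
    have hmem := Nat.sInf_mem (⟨t0, ht0⟩ :
      {t | (psdStep (pathG n m))^[t] B = Set.univ}.Nonempty)
    exact le_of_le_of_eq (timeLB B ⟨t0, ht0⟩ hBc _ hmem) hBt
end
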